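/- (Fixed points are stationary points.) Suppose all factors f_a are positive and the positive messages n_{i→a}, m^BP_{a→i}, m^MF_{a→i} with positive constants z_i (z_i = 1 for i ∈ I_BP) and z_a satisfy the combined BP–MF fixed-point equations: n_{i→a}(x_i) = z_i ∏_{c∈N_BP(i)\a} m^BP_{c→i}(x_i) ∏_{c∈N_MF(i)} m^MF_{c→i}(x_i); m^BP_{a→i}(x_i) = z_a ∑_{x_a\x_i} f_a(x_a) ∏_{j∈N(a)\i} n_{j→a}(x_j) for a ∈ A_BP; m^MF_{a→i}(x_i) = exp(∑_{x_a\x_i} (∏_{j∈N(a)\i} n_{j→a}(x_j)) ln f_a(x_a)) for a ∈ A_MF. Define b_a(x_a) := z_a f_a(x_a) ∏_{i∈N(a)} n_{i→a}(x_i) (a ∈ A_BP) and b_i(x_i) := z_i ∏_{a∈N_BP(i)} m^BP_{a→i}(x_i) ∏_{a∈N_MF(i)} m^MF_{a→i}(x_i) (i ∈ I), and assume these are normalized probability mass functions. Then there exist real-valued functions λ_{a,i} on S_i (a ∈ A_BP, i ∈ N(a)) and real constants γ_i (i ∈ I_MF\I_BP) and γ_a (a ∈ A_BP) such that the stationarity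 equations hold: for all i ∈ I and all x_i, ln b_i(x_i) = ∑_{a∈N_BP(i)} λ_{a,i}(x_i) + ∑_{a∈N_MF(i)} ∑_{x_a\x_i} (∏_{j∈N(a)\i} b_j(x_j)) ln f_a(x_a) + |N_BP(i)| + 1_{I_MF\I_BP}(i)·γ_i − 1; and for all a ∈ A_BP and all x_a, ln b_a(x_a) = ln f_a(x_a) − ∑_{i∈N(a)} λ_{a,i}(x_i) + ∑_{i∈N(a)} ln b_i(x_i) + γ_a − 1. -/

import Mathlib

open Finset

abbrev Cfg {ι : Type} (S : ι → Type) (t : Finset ι) : Type :=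
  ∀ j : {x // x ∈ t}, S j.1

theorem statement8
    {ι α : Type} [Fintype ι] [Fintype α] [DecidableEq ι] [DecidableEq α]
    (S : ι → Type) [∀ i, Fintype (S i)] [∀ i, Nonempty (S i)] [∀ i, DecidableEq (S i)]
    (N : α → Finset ι) (αBP αMF : Finset α)
    (hdisj : Disjoint αBP αMF) (hcov : αBP ∪ αMF = Finset.univ)
    (hIcov : ∀ i : ι, i ∈ αBP.biUnion N ∪ αMF.biUnion N)
    (f : ∀ a : α, Cfg S (N a) → ℝ) (hf : ∀ a xa, 0 < f a xa)
    (n : ∀ i : ι, α → S i → ℝ) (mBP mMF : α → ∀ i : ι, S i → ℝ)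
    (hnpos : ∀ i : ι, ∀ a : α, i ∈ N a → ∀ xi, 0 < n i a xi)
    (hmBPpos : ∀ a ∈ αBP, ∀ i ∈ N a, ∀ xi, 0 < mBP a i xi)
    (hmMFpos : ∀ a ∈ αMF, ∀ i ∈ N a, ∀ xi, 0 < mMF a i xi)
    (zi : ι → ℝ) (za : α → ℝ)
    (hzipos : ∀ i, 0 < zi i) (hziBP : ∀ i ∈ αBP.biUnion N, zi i = 1)
    (hzapos : ∀ a ∈ αBP, 0 < za a)
    (hfpn : ∀ a : α, ∀ i ∈ N a, ∀ xi : S i,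
      n i a xi = zi i *
        (∏ c ∈ (αBP.filter (fun c => i ∈ N c)).erase a, mBP c i xi) *
        ∏ c ∈ αMF.filter (fun c => i ∈ N c), mMF c i xi)
    (hfpBP : ∀ a ∈ αBP, ∀ i : ι, ∀ hi : i ∈ N a, ∀ xi : S i,
      mBP a i xi = za a * ∑ xa : Cfg S (N a),
        (if xa ⟨i, hi⟩ = xi then
          f a xa * ∏ j ∈ univ.filter (fun j : {x // x ∈ N a} => j.1 ≠ i), n j.1 a (xa j)
        else 0))
    (hfpMF : ∀ a ∈ αMF, ∀ i : ι, ∀ hi : i ∈ N a, ∀ xi : S i,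
      mMF a i xi = Real.exp (∑ xa : Cfg S (N a),
        (if xa ⟨i, hi⟩ = xi then
          (∏ j ∈ univ.filter (fun j : {x // x ∈ N a} => j.1 ≠ i), n j.1 a (xa j)) *
            Real.log (f a xa)
        else 0)))
    (ba : ∀ a : α, Cfg S (N a) → ℝ) (bi : ∀ i : ι, S i → ℝ)
    (hba : ∀ a ∈ αBP, ∀ xa : Cfg S (N a),
      ba a xa = za a * f a xa * ∏ j : {x // x ∈ N a}, n j.1 a (xa j))
    (hbi : ∀ i : ι, ∀ xi : S i,
      bi i xi = zi i * (∏ a ∈ αBP.filter (fun c => i ∈ N c), mBP a i xi) *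
        ∏ a ∈ αMF.filter (fun c => i ∈ N c), mMF a i xi)
    (hbanorm : ∀ a ∈ αBP, ∑ xa : Cfg S (N a), ba a xa = 1)
    (hbinorm : ∀ i : ι, ∑ xi : S i, bi i xi = 1) :
    ∃ (lam : α → ∀ i : ι, S i → ℝ) (γi : ι → ℝ) (γa : α → ℝ),
      (∀ i : ι, ∀ xi : S i,
        Real.log (bi i xi) =
          (∑ a ∈ αBP.filter (fun c => i ∈ N c), lam a i xi)
          + (∑ a ∈ αMF.filter (fun c => i ∈ N c),
              if h : i ∈ N a then
                ∑ xa : Cfg S (N a),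
                  (if xa ⟨i, h⟩ = xi then
                    (∏ j ∈ univ.filter (fun j : {x // x ∈ N a} => j.1 ≠ i),
                      bi j.1 (xa j)) * Real.log (f a xa)
                  else 0)
              else 0)
          + ((αBP.filter (fun c => i ∈ N c)).card : ℝ)
          + (if i ∈ αMF.biUnion N \ αBP.biUnion N then γi i else 0)
          - 1) ∧
      (∀ a ∈ αBP, ∀ xa : Cfg S (N a),
        Real.log (ba a xa) =
          Real.log (f a xa)
          - (∑ j : {x // x ∈ N a}, lam a j.1 (xa j))
          + (∑ j : {x // x ∈ N a}, Real.log (bi j.1 (xa j)))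
          + γa a - 1) := by
  classical
  -- positivity facts
  have hbipos : ∀ i : ι, ∀ xi : S i, 0 < bi i xi := by
    intro i xi
    rw [hbi]
    apply mul_pos
    apply mul_pos (hzipos i)
    · exact Finset.prod_pos (fun a ha => hmBPpos a (Finset.mem_filter.mp ha).1 i
        (Finset.mem_filter.mp ha).2 xi)
    · exact Finset.prod_pos (fun a ha => hmMFpos a (Finset.mem_filter.mp ha).1 i
        (Finset.mem_filter.mp ha).2 xi)
  -- L1 : for a ∈ αBP and i ∈ N a, bi = n * mBP
  have L1 : ∀ a ∈ αBP, ∀ i ∈ N a, ∀ xi : S i,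
      bi i xi = n i a xi * mBP a i xi := by
    intro a ha i hi xi
    have hmem : a ∈ αBP.filter (fun c => i ∈ N c) := Finset.mem_filter.mpr ⟨ha, hi⟩
    rw [hbi, hfpn a i hi, ← Finset.mul_prod_erase _ _ hmem]
    ring
  -- L2 : for a ∈ αMF and i ∈ N a, bi = n
  have L2 : ∀ a ∈ αMF, ∀ i ∈ N a, ∀ xi : S i, bi i xi = n i a xi := by
    intro a ha i hi xi
    have hnot : a ∉ αBP.filter (fun c => i ∈ N c) := by
      intro hc
      exact (Finset.disjoint_left.mp hdisj (Finset.mem_filter.mp hc).1) ha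
    rw [hbi, hfpn a i hi, Finset.erase_eq_of_notMem hnot]
  -- log of bi expanded
  have hlogbi : ∀ i : ι, ∀ xi : S i,
      Real.log (bi i xi) = Real.log (zi i)
        + (∑ a ∈ αBP.filter (fun c => i ∈ N c), Real.log (mBP a i xi))
        + ∑ a ∈ αMF.filter (fun c => i ∈ N c), Real.log (mMF a i xi) := by
    intro i xi
    rw [hbi]
    rw [Real.log_mul (mul_pos (hzipos i) (Finset.prod_pos (fun a ha => hmBPpos a
        (Finset.mem_filter.mp ha).1 i (Finset.mem_filter.mp ha).2 xi))).ne'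
      (Finset.prod_pos (fun a ha => hmMFpos a
        (Finset.mem_filter.mp ha).1 i (Finset.mem_filter.mp ha).2 xi)).ne']
    rw [Real.log_mul (hzipos i).ne' (Finset.prod_pos (fun a ha => hmBPpos a
        (Finset.mem_filter.mp ha).1 i (Finset.mem_filter.mp ha).2 xi)).ne']
    rw [Real.log_prod (fun a ha => (hmBPpos a
        (Finset.mem_filter.mp ha).1 i (Finset.mem_filter.mp ha).2 xi).ne')]
    rw [Real.log_prod (fun a ha => (hmMFpos a
        (Finset.mem_filter.mp ha).1 i (Finset.mem_filter.mp ha).2 xi).ne')]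
  -- λ value for BP neighbors
  have hlam : ∀ a ∈ αBP, ∀ i ∈ N a, ∀ xi : S i,
      Real.log (bi i xi) - Real.log (n i a xi) = Real.log (mBP a i xi) := by
    intro a ha i hi xi
    rw [L1 a ha i hi xi, Real.log_mul (hnpos i a hi xi).ne'
      (hmBPpos a ha i hi xi).ne']
    ring
  refine ⟨fun a i xi => Real.log (bi i xi) - Real.log (n i a xi)
      + (1 / ((αBP.filter (fun c => i ∈ N c)).card : ℝ) - 1),
    fun i => Real.log (zi i) + 1,
    fun a => 1 + Real.log (za a)
      + ∑ j : {x // x ∈ N a}, (1 / ((αBP.filter (fun c => j.1 ∈ N c)).card : ℝ) - 1),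
    ?_, ?_⟩
  · intro i xi
    -- MF sum equals sum of log mMF
    have hMF : (∑ a ∈ αMF.filter (fun c => i ∈ N c),
        if h : i ∈ N a then
          ∑ xa : Cfg S (N a),
            (if xa ⟨i, h⟩ = xi then
              (∏ j ∈ univ.filter (fun j : {x // x ∈ N a} => j.1 ≠ i),
                bi j.1 (xa j)) * Real.log (f a xa)
            else 0)
        else 0)
        = ∑ a ∈ αMF.filter (fun c => i ∈ N c), Real.log (mMF a i xi) := by
      apply Finset.sum_congr rfl
      intro a ha
      obtain ⟨haMF, hiN⟩ := Finset.mem_filter.mp ha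
      rw [dif_pos hiN, hfpMF a haMF i hiN xi, Real.log_exp]
      apply Finset.sum_congr rfl
      intro xa _
      have hprod : (∏ j ∈ univ.filter (fun j : {x // x ∈ N a} => j.1 ≠ i), bi j.1 (xa j))
          = ∏ j ∈ univ.filter (fun j : {x // x ∈ N a} => j.1 ≠ i), n j.1 a (xa j) :=
        Finset.prod_congr rfl (fun j _ => L2 a haMF j.1 j.2 (xa j))
      rw [hprod]
    rw [hMF]
    -- BP λ sum
    have hBP : (∑ a ∈ αBP.filter (fun c => i ∈ N c),
        (Real.log (bi i xi) - Real.log (n i a xi)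
          + (1 / ((αBP.filter (fun c => i ∈ N c)).card : ℝ) - 1)))
        = (∑ a ∈ αBP.filter (fun c => i ∈ N c), Real.log (mBP a i xi))
          + ((αBP.filter (fun c => i ∈ N c)).card : ℝ)
            * (1 / ((αBP.filter (fun c => i ∈ N c)).card : ℝ) - 1) := by
      rw [Finset.sum_add_distrib, Finset.sum_const, nsmul_eq_mul]
      congr 1
      apply Finset.sum_congr rfl
      intro a ha
      obtain ⟨haBP, hiN⟩ := Finset.mem_filter.mp ha
      exact hlam a haBP i hiN xi
    rw [hBP, hlogbi i xi]
    by_cases hiBP : i ∈ αBP.biUnion N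
    · have hz1 : zi i = 1 := hziBP i hiBP
      have hcard : (0 : ℝ) < ((αBP.filter (fun c => i ∈ N c)).card : ℝ) := by
        obtain ⟨a, ha, hiN⟩ := Finset.mem_biUnion.mp hiBP
        have : a ∈ αBP.filter (fun c => i ∈ N c) := Finset.mem_filter.mpr ⟨ha, hiN⟩
        exact_mod_cast Finset.card_pos.mpr ⟨a, this⟩
      have hind : i ∉ αMF.biUnion N \ αBP.biUnion N := by
        simp [hiBP]
      rw [if_neg hind, hz1, Real.log_one]
      field_simp
      ring
    · have hempty : αBP.filter (fun c => i ∈ N c) = ∅ := by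
        rw [Finset.filter_eq_empty_iff]
        intro a ha hiN
        exact hiBP (Finset.mem_biUnion.mpr ⟨a, ha, hiN⟩)
      have hiMF : i ∈ αMF.biUnion N := by
        rcases Finset.mem_union.mp (hIcov i) with h | h
        · exact absurd h hiBP
        · exact h
      have hind : i ∈ αMF.biUnion N \ αBP.biUnion N :=
        Finset.mem_sdiff.mpr ⟨hiMF, hiBP⟩
      rw [if_pos hind, hempty]
      simp only [Finset.sum_empty, Finset.card_empty, Nat.cast_zero]
      ring
  · intro a ha xa
    rw [hba a ha xa]
    rw [Real.log_mul (mul_pos (hzapos a ha) (hf a xa)).ne'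
      (Finset.prod_pos (fun j _ => hnpos j.1 a j.2 (xa j))).ne']
    rw [Real.log_mul (hzapos a ha).ne' (hf a xa).ne']
    rw [Real.log_prod (fun j _ => (hnpos j.1 a j.2 (xa j)).ne')]
    rw [Finset.sum_add_distrib, Finset.sum_sub_distrib]
    ring
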